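/- Let K ⊆ ℝⁿ be a symmetric convex set, v ∈ S^{n−1} a unit vector, and c ≥ 0 such that the Gaussian volume of the slab Dict_{cv} := {x : |v·x| ≤ c} equals that of K, i.e., γ(Dict_{cv}) = γ(K). Then Inf_v[K] ≤ Inf_v[Dict_{cv}]. In fact this holds for any Borel measurable set K with γ(K) = γ(Dict_{cv}). -/

import Mathlib

open MeasureTheory ProbabilityTheory Real

/-- The standard Gaussian measure `N(0,1)^n` on `Fin n → ℝ`. -/
noncomputable def stdGaussian (n : ℕ) : Measure (Fin n → ℝ) :=
  Measure.pi fun _ => gaussianReal 0 1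

/-- The 0/1 indicator function of a set. -/
noncomputable def ind {n : ℕ} (K : Set (Fin n → ℝ)) (x : Fin n → ℝ) : ℝ :=
  Set.indicator K (fun _ => (1:ℝ)) x

/-- The convex influence of direction `v` on `K`:
`Inf_v[K] = E_{x ∼ N(0,1)^n}[K(x) · (1 - (v·x)²)/√2]`. -/
noncomputable def convInf {n : ℕ} (K : Set (Fin n → ℝ)) (v : Fin n → ℝ) : ℝ :=
  ∫ x, ind K x * ((1 - (∑ i, v i * x i)^2) / Real.sqrt 2) ∂(stdGaussian n)

/-- Total convex influence, defined as the sum of coordinate influences. -/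
noncomputable def convTInf {n : ℕ} (K : Set (Fin n → ℝ)) : ℝ :=
  ∑ i : Fin n, convInf K (fun j => if j = i then 1 else 0)

/-- Total convex influence in integral form:
`TInf[K] = E_{x ∼ N(0,1)^n}[K(x) · (n - ‖x‖²)/√2]`. -/
noncomputable def convTInfI {n : ℕ} (K : Set (Fin n → ℝ)) : ℝ :=
  ∫ x, ind K x * (((n : ℝ) - ∑ i, (x i)^2) / Real.sqrt 2) ∂(stdGaussian n)

/-- Gaussian volume `γ(K)` under `N(0,1)^n`. -/
noncomputable def gvol {n : ℕ} (K : Set (Fin n → ℝ)) : ℝ :=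
  (stdGaussian n K).toReal

/-- Variance of the indicator of `K` under the standard Gaussian: `γ(K)(1-γ(K))`. -/
noncomputable def gvar {n : ℕ} (K : Set (Fin n → ℝ)) : ℝ :=
  gvol K * (1 - gvol K)

instance (n : ℕ) : IsProbabilityMeasure (stdGaussian n) := by
  unfold _root_.stdGaussian; infer_instance

/-- The second moment of the standard Gaussian on `ℝ` is finite. -/
lemma integrable_sq_gaussian : Integrable (fun x : ℝ => x ^ 2) (gaussianReal 0 1) := by
  rw [gaussianReal_of_var_ne_zero 0 one_ne_zero,
    integrable_withDensity_iff (measurable_gaussianPDF 0 1)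
      (ae_of_all _ fun x => ENNReal.ofReal_lt_top)]
  have hpdf : ∀ x : ℝ, (gaussianPDF 0 1 x).toReal = gaussianPDFReal 0 1 x := fun x =>
    ENNReal.toReal_ofReal (gaussianPDFReal_nonneg 0 1 x)
  simp only [hpdf, gaussianPDFReal, NNReal.coe_one, mul_one, sub_zero]
  have hb : Integrable (fun x : ℝ => (Real.sqrt (2 * π))⁻¹ *
      (4 * Real.exp (-(1/4) * x ^ 2))) volume :=
    (((integrable_exp_neg_mul_sq (by norm_num : (0:ℝ) < 1/4)).const_mul 4).const_mul _)
  refine hb.mono' (Measurable.aestronglyMeasurable (by fun_prop)) (ae_of_all _ fun x => ?_)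
  have key : x ^ 2 * Real.exp (-x ^ 2 / 2) ≤ 4 * Real.exp (-(1/4) * x ^ 2) := by
    have h1 : x ^ 2 ≤ 4 * Real.exp (x ^ 2 / 4) := by
      have := Real.add_one_le_exp (x ^ 2 / 4)
      nlinarith [Real.exp_pos (x ^ 2 / 4)]
    have h2 : Real.exp (x ^ 2 / 4) * Real.exp (-x ^ 2 / 2) = Real.exp (-(1/4) * x ^ 2) := by
      rw [← Real.exp_add]; ring_nf
    nlinarith [Real.exp_pos (-x ^ 2 / 2), Real.exp_pos (-(1/4) * x ^ 2)]
  have hs : (0:ℝ) < Real.sqrt (2 * π) := Real.sqrt_pos.2 (by positivity)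
  rw [Real.norm_eq_abs, abs_of_nonneg (by positivity)]
  calc x ^ 2 * ((Real.sqrt (2 * π))⁻¹ * Real.exp (-x ^ 2 / 2))
      = (Real.sqrt (2 * π))⁻¹ * (x ^ 2 * Real.exp (-x ^ 2 / 2)) := by ring
    _ ≤ _ := mul_le_mul_of_nonneg_left key (by positivity)

/-- Coordinate evaluation is measure preserving from `stdGaussian n` to `gaussianReal 0 1`. -/
lemma measurePreserving_eval_std (n : ℕ) (i : Fin n) :
    MeasurePreserving (fun x : Fin n → ℝ => x i) (stdGaussian n) (gaussianReal 0 1) := by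
  refine ⟨measurable_pi_apply i, ?_⟩
  ext s hs
  rw [Measure.map_apply (measurable_pi_apply i) hs]
  have : (fun x : Fin n → ℝ => x i) ⁻¹' s =
      Set.pi Set.univ (Function.update (fun _ => Set.univ) i s) := by
    rw [← Set.eval_preimage]
  rw [this, _root_.stdGaussian, Measure.pi_pi]
  rw [Finset.prod_eq_single i (fun j _ hj => by simp [Function.update_of_ne hj]) (by simp)]
  simp

/-- The square of a linear functional is integrable w.r.t. the standard Gaussian. -/
lemma integrable_sq_dot (n : ℕ) (v : Fin n → ℝ) :
    Integrable (fun x : Fin n → ℝ => (∑ i, v i * x i) ^ 2) (stdGaussian n) := by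
  have hid : MemLp (id : ℝ → ℝ) 2 (gaussianReal 0 1) := by
    rw [memLp_two_iff_integrable_sq aestronglyMeasurable_id]
    exact integrable_sq_gaussian
  have hsum : MemLp (fun x : Fin n → ℝ => ∑ i, v i * x i) 2 (stdGaussian n) :=
    memLp_finset_sum _ (fun i _ =>
      (hid.comp_measurePreserving (measurePreserving_eval_std n i)).const_mul (v i))
  exact hsum.integrable_sq

/-- Among all measurable sets of a given Gaussian volume, the slab
`Dict_{cv} = {x : |v·x| ≤ c}` maximizes the convex influence in direction `v`. -/
theorem stmt7 (n : ℕ) (K : Set (Fin n → ℝ)) (hmeas : MeasurableSet K)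
    (v : Fin n → ℝ) (hv : ∑ i, (v i) ^ 2 = 1) (c : ℝ) (hc : 0 ≤ c)
    (hvol : stdGaussian n {x | |∑ i, v i * x i| ≤ c} = stdGaussian n K) :
    convInf K v ≤ convInf {x | |∑ i, v i * x i| ≤ c} v := by
  set μ := stdGaussian n with hμ
  set S : (Fin n → ℝ) → ℝ := fun x => ∑ i, v i * x i with hS
  set f : (Fin n → ℝ) → ℝ := fun x => (1 - S x ^ 2) / Real.sqrt 2 with hf
  set D : Set (Fin n → ℝ) := {x | |S x| ≤ c} with hD
  have hSmeas : Measurable S :=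
    Finset.measurable_sum _ fun i _ => measurable_const.mul (measurable_pi_apply i)
  have hDmeas : MeasurableSet D := measurableSet_le hSmeas.abs measurable_const
  have hfint : Integrable f μ :=
    ((integrable_const (1:ℝ)).sub (integrable_sq_dot n v)).div_const _
  -- convInf as set integral
  have hconv : ∀ (A : Set (Fin n → ℝ)), MeasurableSet A →
      convInf A v = ∫ x in A, f x ∂μ := by
    intro A hA
    rw [convInf, ← integral_indicator hA]
    congr 1
    funext x
    by_cases hx : x ∈ A <;> simp [ind, Set.indicator, hx, hf, hS]
  rw [hconv K hmeas, hconv D hDmeas]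
  -- split integrals
  have hsplitK : ∫ x in K, f x ∂μ = (∫ x in K ∩ D, f x ∂μ) + ∫ x in K \ D, f x ∂μ :=
    (integral_inter_add_diff hDmeas hfint.integrableOn).symm
  have hsplitD : ∫ x in D, f x ∂μ = (∫ x in K ∩ D, f x ∂μ) + ∫ x in D \ K, f x ∂μ := by
    rw [← integral_inter_add_diff hmeas hfint.integrableOn, Set.inter_comm]
  rw [hsplitK, hsplitD]
  gcongr ?_ + ?_
  · exact le_rfl
  -- measures of the two difference sets agree
  have hmeq : μ (K \ D) = μ (D \ K) := by
    have h1 : μ (K ∩ D) + μ (K \ D) = μ K := measure_inter_add_diff K hDmeas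
    have h2 : μ (D ∩ K) + μ (D \ K) = μ D := measure_inter_add_diff D hmeas
    rw [Set.inter_comm] at h2
    have := h1.trans (hvol ▸ h2.symm)
    exact (ENNReal.add_right_inj (measure_ne_top μ _)).mp this
  set t : ℝ := (1 - c ^ 2) / Real.sqrt 2 with ht
  have hKD : ∫ x in K \ D, f x ∂μ ≤ t * (μ (K \ D)).toReal := by
    have : ∫ x in K \ D, f x ∂μ ≤ ∫ _x in K \ D, t ∂μ := by
      apply setIntegral_mono_on hfint.integrableOn (integrableOn_const ?_)
        (hmeas.diff hDmeas)
      · intro x hx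
        have hx2 : c < |S x| := not_le.mp hx.2
        have : c ^ 2 < S x ^ 2 := by
          have := sq_abs (S x)
          nlinarith [abs_nonneg (S x)]
        have h2 : (0:ℝ) < Real.sqrt 2 := Real.sqrt_pos.2 (by norm_num)
        exact (div_le_div_iff_of_pos_right h2).mpr (by linarith)
      · exact (measure_lt_top μ _).ne
    simpa [mul_comm, Measure.real] using this
  have hDK : t * (μ (D \ K)).toReal ≤ ∫ x in D \ K, f x ∂μ := by
    have : ∫ _x in D \ K, t ∂μ ≤ ∫ x in D \ K, f x ∂μ := by
      apply setIntegral_mono_on (integrableOn_const (measure_lt_top μ _).ne)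
        hfint.integrableOn (hDmeas.diff hmeas)
      intro x hx
      have hx2 : |S x| ≤ c := hx.1
      have : S x ^ 2 ≤ c ^ 2 := by
        have := sq_abs (S x)
        nlinarith [abs_nonneg (S x)]
      have h2 : (0:ℝ) < Real.sqrt 2 := Real.sqrt_pos.2 (by norm_num)
      exact (div_le_div_iff_of_pos_right h2).mpr (by linarith)
    simpa [mul_comm, Measure.real] using this
  calc ∫ x in K \ D, f x ∂μ ≤ t * (μ (K \ D)).toReal := hKD
    _ = t * (μ (D \ K)).toReal := by rw [hmeq]
    _ ≤ ∫ x in D \ K, f x ∂μ := hDK
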